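/- Pure Nash equilibria of the multi-unit γ-hybrid auction without overbidding are efficient: Let γ ∈ (0,1), let there be k ≥ 1 identical items and n ≥ 2 bidders with nondecreasing submodular valuations v_i : {0,…,k} → ℝ≥0, v_i(0) = 0. Let b be a pure Nash equilibrium of the multi-unit γ-hybrid auction in which every bidder's strategy space consists of nonincreasing marginal bid vectors satisfying no overbidding. Then ∑_i v_i(x_i(b)) = max { ∑_i v_i(y_i) : y : Fin n → ℕ, ∑_i y_i = k }, i.e., the equilibrium allocation maximizes social welfare. -/

import Mathlib

open Finset
open scoped Classical

noncomputable section

/-- Lexicographic priority on pairs (bidder index, item index), used for tie-breaking. -/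
def LexLT {n k : ℕ} (p q : Fin n × Fin k) : Prop :=
  p.1 < q.1 ∨ (p.1 = q.1 ∧ p.2 < q.2)

/-- In a bid profile `b`, marginal bid `p` beats marginal bid `q` if it is strictly
higher, or equal and lexicographically prior. -/
def Beats {n k : ℕ} (b : Fin n → Fin k → ℝ) (p q : Fin n × Fin k) : Prop :=
  b q.1 q.2 < b p.1 p.2 ∨ (b p.1 p.2 = b q.1 q.2 ∧ LexLT p q)

/-- Marginal bid `q` is among the `k` highest (wins an item). -/
def WinsPair {n k : ℕ} (b : Fin n → Fin k → ℝ) (q : Fin n × Fin k) : Prop :=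
  (univ.filter (fun p : Fin n × Fin k => Beats b p q)).card < k

/-- The number of items allocated to bidder `i` under bid profile `b`. -/
def alloc {n k : ℕ} (b : Fin n → Fin k → ℝ) (i : Fin n) : ℕ :=
  (univ.filter (fun j : Fin k => WinsPair b (i, j))).card

/-- The highest losing marginal bid. -/
def highestLosing {n k : ℕ} (b : Fin n → Fin k → ℝ) : ℝ :=
  sSup {x : ℝ | ∃ q : Fin n × Fin k, ¬ WinsPair b q ∧ x = b q.1 q.2}

/-- The γ-hybrid payment of bidder `i`: a convex combination of the first-price payment
(the sum of `i`'s winning marginal bids) and the second-price payment. -/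
def hybridPayment {n k : ℕ} (γ : ℝ) (b : Fin n → Fin k → ℝ) (i : Fin n) : ℝ :=
  γ * (∑ j ∈ univ.filter (fun j : Fin k => (j : ℕ) < alloc b i), b i j)
    + (1 - γ) * (alloc b i : ℝ) * highestLosing b

/-- Utility of bidder `i` with valuation function `v i` in the multi-unit γ-hybrid
auction. -/
def hybridUtility {n k : ℕ} (γ : ℝ) (v : Fin n → ℕ → ℝ)
    (b : Fin n → Fin k → ℝ) (i : Fin n) : ℝ :=
  v i (alloc b i) - hybridPayment γ b i

/-- A valid bid vector for a bidder with valuation `vi`: nonnegative, nonincreasing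
marginal bids satisfying no overbidding. -/
def ValidBid (k : ℕ) (vi : ℕ → ℝ) (bi : Fin k → ℝ) : Prop :=
  (∀ j, 0 ≤ bi j) ∧ (∀ j j' : Fin k, j ≤ j' → bi j' ≤ bi j) ∧
    ∀ q : ℕ, 1 ≤ q → q ≤ k →
      (∑ j ∈ univ.filter (fun j : Fin k => (j : ℕ) < q), bi j) ≤ vi q

namespace Aux

variable {n k : ℕ}

/-- The sort key: bids descending, ties by lex priority. -/
def key (b : Fin n → Fin k → ℝ) (q : Fin n × Fin k) : Lex (ℝᵒᵈ × Lex (Fin n × Fin k)) :=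
  toLex (OrderDual.toDual (b q.1 q.2), toLex (q.1, q.2))

lemma beats_iff_key {b : Fin n → Fin k → ℝ} {p q : Fin n × Fin k} :
    Beats b p q ↔ key b p < key b q := by
  unfold Beats key LexLT
  rw [Prod.Lex.lt_iff]
  constructor
  · rintro (h | ⟨h1, h2⟩)
    · exact Or.inl h
    · refine Or.inr ⟨by simpa using h1.symm ▸ rfl, ?_⟩
      rw [Prod.Lex.lt_iff]; exact h2
  · rintro (h | ⟨h1, h2⟩)
    · exact Or.inl h
    · refine Or.inr ⟨?_, ?_⟩
      · have := congrArg OrderDual.ofDual h1; simpa using this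
      · rw [Prod.Lex.lt_iff] at h2; exact h2

lemma key_injective (b : Fin n → Fin k → ℝ) : Function.Injective (key b) := by
  intro p q h
  unfold key at h
  have h2 := congrArg (fun x => (ofLex x).2) h
  simp at h2
  have := congrArg ofLex h2
  exact Prod.ext (by have h := congrArg Prod.fst this; exact h) (by have h := congrArg Prod.snd this; exact h)

lemma beats_irrefl (b : Fin n → Fin k → ℝ) (q : Fin n × Fin k) : ¬ Beats b q q := by
  rw [beats_iff_key]; exact lt_irrefl _

lemma beats_trans {b : Fin n → Fin k → ℝ} {p q r : Fin n × Fin k}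
    (h1 : Beats b p q) (h2 : Beats b q r) : Beats b p r := by
  rw [beats_iff_key] at *; exact h1.trans h2

/-- rank of a pair = number of pairs beating it -/
def rank (b : Fin n → Fin k → ℝ) (q : Fin n × Fin k) : ℕ :=
  (univ.filter (fun p : Fin n × Fin k => Beats b p q)).card

lemma winsPair_iff_rank {b : Fin n → Fin k → ℝ} {q : Fin n × Fin k} :
    WinsPair b q ↔ rank b q < k := Iff.rfl

lemma rank_lt_of_beats {b : Fin n → Fin k → ℝ} {p q : Fin n × Fin k}
    (h : Beats b p q) : rank b p < rank b q := by
  have hsub : insert p (univ.filter (fun r => Beats b r p)) ⊆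
      univ.filter (fun r => Beats b r q) := by
    intro r hr
    rcases Finset.mem_insert.mp hr with rfl | hr
    · simp [h]
    · simp only [mem_filter, mem_univ, true_and] at hr ⊢
      exact beats_trans hr h
  have hp : p ∉ univ.filter (fun r => Beats b r p) := by
    simp [beats_irrefl]
  calc rank b p < (insert p (univ.filter (fun r => Beats b r p))).card := by
        rw [Finset.card_insert_of_notMem hp]; exact Nat.lt_succ_self _
    _ ≤ rank b q := Finset.card_le_card hsub

lemma rank_injective (b : Fin n → Fin k → ℝ) : Function.Injective (rank b) := by
  intro p q h
  by_contra hne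
  rcases lt_or_gt_of_ne (fun he => hne (key_injective b he)) with hlt | hlt
  · exact absurd h (Nat.ne_of_lt (rank_lt_of_beats (beats_iff_key.mpr hlt)))
  · exact absurd h.symm (Nat.ne_of_lt (rank_lt_of_beats (beats_iff_key.mpr hlt)))

lemma rank_lt_card (b : Fin n → Fin k → ℝ) (q : Fin n × Fin k) :
    rank b q < n * k := by
  have : (univ.filter (fun p : Fin n × Fin k => Beats b p q)) ⊆ univ.erase q := by
    intro p hp
    simp only [mem_filter, mem_univ, true_and] at hp
    refine Finset.mem_erase.mpr ⟨fun he => beats_irrefl b q (he ▸ hp), mem_univ _⟩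
  have h2 := Finset.card_le_card this
  rw [Finset.card_erase_of_mem (mem_univ q)] at h2
  have h3 : (univ : Finset (Fin n × Fin k)).card = n * k := by
    simp [Fintype.card_prod]
  have hpos : 0 < (univ : Finset (Fin n × Fin k)).card :=
    Finset.card_pos.mpr ⟨q, mem_univ q⟩
  unfold rank
  omega

lemma winners_card (b : Fin n → Fin k → ℝ) (hkn : k ≤ n * k) :
    (univ.filter (fun q : Fin n × Fin k => WinsPair b q)).card = k := by
  classical
  have himg : (univ : Finset (Fin n × Fin k)).image (rank b) = Finset.range (n * k) := by
    apply Finset.eq_of_subset_of_card_le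
    · intro m hm
      rcases Finset.mem_image.mp hm with ⟨q, _, rfl⟩
      exact Finset.mem_range.mpr (rank_lt_card b q)
    · rw [Finset.card_range, Finset.card_image_of_injective _ (rank_injective b)]
      simp [Fintype.card_prod]
  have hfil : (univ.filter (fun q : Fin n × Fin k => WinsPair b q)).image (rank b)
      = (Finset.range (n * k)).filter (fun m => m < k) := by
    rw [← himg]
    ext m
    simp only [Finset.mem_image, mem_filter, mem_univ, true_and]
    constructor
    · rintro ⟨q, hq, rfl⟩; exact ⟨⟨q, rfl⟩, hq⟩
    · rintro ⟨⟨q, rfl⟩, hq⟩; exact ⟨q, hq, rfl⟩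
  have hc := congrArg Finset.card hfil
  rw [Finset.card_image_of_injective _ (rank_injective b)] at hc
  rw [hc]
  have : (Finset.range (n * k)).filter (fun m => m < k) = Finset.range k := by
    ext m
    simp only [mem_filter, Finset.mem_range]
    omega
  rw [this, Finset.card_range]

end Aux

namespace Aux
variable {n k : ℕ}


/-- cardinality of slot-filter: number of slots with value < m -/
lemma card_slots_lt (m : ℕ) (hm : m ≤ k) :
    (univ.filter (fun j : Fin k => (j : ℕ) < m)).card = m := by
  classical
  have : (univ.filter (fun j : Fin k => (j : ℕ) < m)).image Fin.val = Finset.range m := by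
    apply Finset.Subset.antisymm
    · intro a ha
      rcases Finset.mem_image.mp ha with ⟨j, hj, rfl⟩
      simp only [mem_filter] at hj
      exact Finset.mem_range.mpr hj.2
    · intro a ha
      have halt : a < m := Finset.mem_range.mp ha
      exact Finset.mem_image.mpr ⟨⟨a, lt_of_lt_of_le halt hm⟩, by simp [halt], rfl⟩
  have hc := congrArg Finset.card this
  rwa [Finset.card_image_of_injective _ Fin.val_injective, Finset.card_range] at hc

/-- fiber card: pairs with first coordinate i satisfying P on second -/
lemma card_fiber (i : Fin n) (P : Fin k → Prop) [DecidablePred P]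
    [DecidablePred fun q : Fin n × Fin k => q.1 = i ∧ P q.2] :
    (univ.filter (fun q : Fin n × Fin k => q.1 = i ∧ P q.2)).card
      = (univ.filter (fun j : Fin k => P j)).card := by
  classical
  apply Finset.card_nbij' (fun q => q.2) (fun j => (i, j))
  · intro q hq; simp only [Finset.mem_coe, mem_filter, mem_univ, true_and] at hq ⊢; exact hq.2
  · intro j hj
    exact Finset.mem_filter.mpr ⟨mem_univ _, rfl, (Finset.mem_filter.mp hj).2⟩
  · intro q hq; simp only [Finset.mem_coe, mem_filter, mem_univ, true_and] at hq
    exact Prod.ext hq.1.symm rfl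
  · intro j _; rfl

lemma sum_alloc (b : Fin n → Fin k → ℝ) (hkn : k ≤ n * k) :
    (∑ i, alloc b i) = k := by
  classical
  have h1 : (univ.filter (fun q : Fin n × Fin k => WinsPair b q)).card = ∑ i, alloc b i := by
    rw [Finset.card_eq_sum_card_fiberwise (f := Prod.fst) (t := univ) (fun x _ => mem_univ _)]
    apply Finset.sum_congr rfl
    intro i _
    have heq : (filter (fun q : Fin n × Fin k => WinsPair b q) univ).filter (fun q => q.1 = i)
        = univ.filter (fun q : Fin n × Fin k => q.1 = i ∧ WinsPair b (i, q.2)) := by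
      rw [Finset.filter_filter]
      apply Finset.filter_congr
      intro q _
      constructor
      · rintro ⟨hw, rfl⟩; exact ⟨rfl, hw⟩
      · rintro ⟨rfl, hw⟩; exact ⟨hw, rfl⟩
    rw [heq, card_fiber i (fun j => WinsPair b (i, j))]
    rfl
  rw [← h1]
  exact winners_card b hkn

lemma alloc_le (b : Fin n → Fin k → ℝ) (i : Fin n) : alloc b i ≤ k := by
  have := Finset.card_filter_le (univ : Finset (Fin k)) (fun j => WinsPair b (i, j))
  simpa [alloc] using this

/-- winners' bids are at least losers' bids -/
lemma loser_bid_le {b : Fin n → Fin k → ℝ} {q q' : Fin n × Fin k}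
    (hq : WinsPair b q) (hq' : ¬ WinsPair b q') : b q'.1 q'.2 ≤ b q.1 q.2 := by
  by_contra hlt
  push_neg at hlt
  have hbeat : Beats b q' q := Or.inl hlt
  have hsub : insert q' (univ.filter (fun p => Beats b p q')) ⊆
      univ.filter (fun p => Beats b p q) := by
    intro p hp
    rcases Finset.mem_insert.mp hp with rfl | hp
    · simp [hbeat]
    · simp only [mem_filter, mem_univ, true_and] at hp ⊢
      exact beats_trans hp hbeat
  have hq'n : q' ∉ univ.filter (fun p => Beats b p q') := by simp [beats_irrefl]
  have := Finset.card_le_card hsub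
  rw [Finset.card_insert_of_notMem hq'n] at this
  unfold WinsPair at hq hq'
  omega

section hl
variable (b : Fin n → Fin k → ℝ)

lemma losers_set_finite :
    {x : ℝ | ∃ q : Fin n × Fin k, ¬ WinsPair b q ∧ x = b q.1 q.2}.Finite := by
  have : {x : ℝ | ∃ q : Fin n × Fin k, ¬ WinsPair b q ∧ x = b q.1 q.2}
      ⊆ Set.range (fun q : Fin n × Fin k => b q.1 q.2) := by
    rintro x ⟨q, _, rfl⟩; exact ⟨q, rfl⟩
  exact (Set.finite_range _).subset this

lemma loser_exists (hn : 1 ≤ n) (hk : 1 ≤ k) (hkn : k < n * k) :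
    ∃ q : Fin n × Fin k, ¬ WinsPair b q := by
  by_contra h
  push_neg at h
  have : (univ.filter (fun q : Fin n × Fin k => WinsPair b q)) = univ := by
    apply Finset.filter_true_of_mem; intro q _; exact h q
  have hc := winners_card b (le_of_lt hkn)
  rw [this] at hc
  simp [Fintype.card_prod] at hc
  omega

lemma le_hl {q : Fin n × Fin k} (hq : ¬ WinsPair b q) :
    b q.1 q.2 ≤ highestLosing b :=
  le_csSup ((losers_set_finite b).bddAbove) ⟨q, hq, rfl⟩

lemma hl_le (hn : 1 ≤ n) (hk : 1 ≤ k) (hkn : k < n * k) {c : ℝ}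
    (h : ∀ q : Fin n × Fin k, ¬ WinsPair b q → b q.1 q.2 ≤ c) :
    highestLosing b ≤ c := by
  obtain ⟨q0, hq0⟩ := loser_exists b hn hk hkn
  refine csSup_le ⟨b q0.1 q0.2, ⟨q0, hq0, rfl⟩⟩ ?_
  rintro x ⟨q, hq, rfl⟩
  exact h q hq

lemma hl_nonneg (hn : 1 ≤ n) (hk : 1 ≤ k) (hkn : k < n * k)
    (hpos : ∀ i j, 0 ≤ b i j) : 0 ≤ highestLosing b := by
  obtain ⟨q0, hq0⟩ := loser_exists b hn hk hkn
  exact le_trans (hpos q0.1 q0.2) (le_hl b hq0)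

lemma hl_le_winner (hn : 1 ≤ n) (hk : 1 ≤ k) (hkn : k < n * k)
    {q : Fin n × Fin k} (hq : WinsPair b q) :
    highestLosing b ≤ b q.1 q.2 :=
  hl_le b hn hk hkn (fun q' hq' => loser_bid_le hq hq')

end hl

/-- within one bidder with nonincreasing bids, pair j' beats pair j iff j' < j. -/
lemma own_beats {b : Fin n → Fin k → ℝ} {i : Fin n}
    (hni : ∀ j j' : Fin k, j ≤ j' → b i j' ≤ b i j) (j j' : Fin k) :
    Beats b (i, j') (i, j) ↔ j' < j := by
  constructor
  · rintro (h | ⟨h1, h2⟩)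
    · by_contra hle
      push_neg at hle
      exact absurd h (not_lt.mpr (hni j j' hle))
    · rcases h2 with h2 | ⟨_, h2⟩
      · exact absurd h2 (lt_irrefl i)
      · exact h2
  · intro hlt
    rcases lt_or_eq_of_le (hni j' j (le_of_lt hlt)) with h | h
    · exact Or.inl h
    · exact Or.inr ⟨h.symm, Or.inr ⟨rfl, hlt⟩⟩

/-- beaters of a same-bidder pair, given nonincreasing own bids, via own/opponent split -/
lemma wins_downward {b : Fin n → Fin k → ℝ} {i : Fin n}
    (hni : ∀ j j' : Fin k, j ≤ j' → b i j' ≤ b i j) {j j' : Fin k}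
    (hj : WinsPair b (i, j)) (hle : j' ≤ j) : WinsPair b (i, j') := by
  rcases eq_or_lt_of_le hle with rfl | hlt
  · exact hj
  have hb : Beats b (i, j') (i, j) := (own_beats hni j j').mpr hlt
  have hsub : (univ.filter (fun p => Beats b p (i, j'))) ⊆
      (univ.filter (fun p => Beats b p (i, j))) := by
    intro p hp
    simp only [mem_filter, mem_univ, true_and] at hp ⊢
    exact beats_trans hp hb
  exact lt_of_le_of_lt (Finset.card_le_card hsub) hj

/-- winners of a bidder form an initial segment of slots -/
lemma wins_iff_lt_alloc {b : Fin n → Fin k → ℝ} {i : Fin n}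
    (hni : ∀ j j' : Fin k, j ≤ j' → b i j' ≤ b i j) (j : Fin k) :
    WinsPair b (i, j) ↔ (j : ℕ) < alloc b i := by
  classical
  constructor
  · intro hw
    have hsub : (univ.filter (fun j' : Fin k => (j' : ℕ) < (j : ℕ) + 1)) ⊆
        (univ.filter (fun j' : Fin k => WinsPair b (i, j'))) := by
      intro j' hj'
      simp only [mem_filter, mem_univ, true_and] at hj' ⊢
      exact wins_downward hni hw (by omega : j'.val ≤ j.val)
    have hc := Finset.card_le_card hsub
    rw [card_slots_lt ((j : ℕ) + 1) j.isLt] at hc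
    exact lt_of_lt_of_le (Nat.lt_succ_self _) hc
  · intro hlt
    by_contra hw
    have hsub : (univ.filter (fun j' : Fin k => WinsPair b (i, j'))) ⊆
        (univ.filter (fun j' : Fin k => (j' : ℕ) < (j : ℕ))) := by
      intro j' hj'
      simp only [mem_filter, mem_univ, true_and] at hj' ⊢
      by_contra hge
      push_neg at hge
      exact hw (wins_downward hni hj' (by exact hge))
    have hc := Finset.card_le_card hsub
    rw [card_slots_lt (j : ℕ) (le_of_lt j.isLt)] at hc
    unfold alloc at hlt
    omega

/-- If bidder `i`'s new bid vector keeps slot `j`'s bid unchanged and both old and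
new own vectors are nonincreasing, the beater set of `(i,j)` is unchanged. -/
lemma beaters_eq_update {b : Fin n → Fin k → ℝ} {i : Fin n} {bi' : Fin k → ℝ}
    (hni : ∀ j j' : Fin k, j ≤ j' → b i j' ≤ b i j)
    (hni' : ∀ j j' : Fin k, j ≤ j' → bi' j' ≤ bi' j)
    {j : Fin k} (hjeq : bi' j = b i j) :
    (univ.filter (fun p => Beats (Function.update b i bi') p (i, j)))
      = (univ.filter (fun p => Beats b p (i, j))) := by
  classical
  ext p
  simp only [mem_filter, mem_univ, true_and]
  by_cases hp : p.1 = i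
  · obtain ⟨p1, p2⟩ := p
    cases hp
    have h1 : Beats (Function.update b p1 bi') (p1, p2) (p1, j) ↔ p2 < j := by
      have : ∀ j j' : Fin k, j ≤ j' → (Function.update b p1 bi') p1 j' ≤ (Function.update b p1 bi') p1 j := by
        simpa using hni'
      exact own_beats this j p2
    have h2 : Beats b (p1, p2) (p1, j) ↔ p2 < j := own_beats hni j p2
    rw [h1, h2]
  · have hb1 : (Function.update b i bi') p.1 p.2 = b p.1 p.2 := by
      rw [Function.update_of_ne hp]
    have hb2 : (Function.update b i bi') (i, j).1 (i, j).2 = b i j := by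
      simp [Function.update_self, hjeq]
    unfold Beats
    rw [hb1, hb2]

/-- pointwise lowering other bids preserves winning of a pair whose bid is unchanged -/
lemma wins_of_le {b b' : Fin n → Fin k → ℝ}
    (hle : ∀ p : Fin n × Fin k, b' p.1 p.2 ≤ b p.1 p.2) {q : Fin n × Fin k}
    (hq : b' q.1 q.2 = b q.1 q.2) (hw : WinsPair b q) : WinsPair b' q := by
  have hsub : (univ.filter (fun p => Beats b' p q)) ⊆ (univ.filter (fun p => Beats b p q)) := by
    intro p hp
    simp only [mem_filter, mem_univ, true_and] at hp ⊢
    rcases hp with h | ⟨h1, h2⟩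
    · exact Or.inl (lt_of_lt_of_le (hq ▸ h) (hle p))
    · rcases lt_or_eq_of_le (hle p) with h | h
      · exact Or.inl (by rw [← hq, ← h1]; exact h)
      · exact Or.inr ⟨by rw [← h, h1, hq], h2⟩
  exact lt_of_le_of_lt (Finset.card_le_card hsub) hw

end Aux

namespace Aux
variable {k : ℕ}

/-- telescoping upper bound -/
lemma diff_le_of_step (w : ℕ → ℝ) (p : ℝ) (a : ℕ) :
    ∀ c, a ≤ c → (∀ m, a ≤ m → m + 1 ≤ c → w (m+1) - w m ≤ p) →
      w c - w a ≤ ((c : ℝ) - a) * p := by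
  intro c hac
  induction c, hac using Nat.le_induction with
  | base => intro _; simp
  | succ c hac ih =>
    intro hstep
    have h1 := ih (fun m hm hmc => hstep m hm (by omega))
    have h2 := hstep c hac (le_refl _)
    have : ((c:ℝ) + 1 - a) * p = ((c:ℝ) - a) * p + p := by ring
    push_cast
    push_cast at h1
    linarith

/-- telescoping lower bound -/
lemma le_diff_of_step (w : ℕ → ℝ) (p : ℝ) (a : ℕ) :
    ∀ c, a ≤ c → (∀ m, a ≤ m → m + 1 ≤ c → p ≤ w (m+1) - w m) →
      ((c : ℝ) - a) * p ≤ w c - w a := by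
  intro c hac
  induction c, hac using Nat.le_induction with
  | base => intro _; simp
  | succ c hac ih =>
    intro hstep
    have h1 := ih (fun m hm hmc => hstep m hm (by omega))
    have h2 := hstep c hac (le_refl _)
    push_cast
    push_cast at h1
    linarith

/-- decreasing marginals chain -/
lemma marg_anti (w : ℕ → ℝ)
    (hsub : ∀ q : ℕ, 1 ≤ q → q + 1 ≤ k → w (q+1) - w q ≤ w q - w (q-1)) :
    ∀ a c, a ≤ c → c + 1 ≤ k → w (c+1) - w c ≤ w (a+1) - w a := by
  intro a c hac
  induction c, hac using Nat.le_induction with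
  | base => intro _; exact le_refl _
  | succ c hac ih =>
    intro hck
    have h1 := hsub (c+1) (by omega) (by omega)
    simp only [Nat.add_sub_cancel] at h1
    exact le_trans h1 (ih (by omega))

/-- monotone chain -/
lemma mono_chain (w : ℕ → ℝ) (hmono : ∀ q : ℕ, q < k → w q ≤ w (q+1)) :
    ∀ a c, a ≤ c → c ≤ k → w a ≤ w c := by
  intro a c hac
  induction c, hac using Nat.le_induction with
  | base => intro _; exact le_refl _
  | succ c hac ih =>
    intro hck
    exact le_trans (ih (by omega)) (hmono c (by omega))

end Aux

namespace Aux
variable {n k : ℕ}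

lemma sum_ite_slots (c d : ℕ) (r : ℝ) (hc : c ≤ k) :
    ∑ j ∈ univ.filter (fun j : Fin k => (j : ℕ) < c), (if (j : ℕ) < d then r else 0)
      = (min c d : ℕ) * r := by
  classical
  rw [← Finset.sum_filter (fun j : Fin k => (j : ℕ) < d) (fun _ => r)]
  rw [Finset.filter_filter]
  have : (univ.filter (fun j : Fin k => (j : ℕ) < c ∧ (j : ℕ) < d))
      = univ.filter (fun j : Fin k => (j : ℕ) < min c d) := by
    apply Finset.filter_congr; intro j _; constructor
    · rintro ⟨h1, h2⟩; simp; omega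
    · intro h; simp at h; omega
  rw [this, Finset.sum_const, card_slots_lt (min c d) (le_trans (min_le_left _ _) hc)]
  simp [nsmul_eq_mul]

lemma winners_fst_card (b : Fin n → Fin k → ℝ) (i : Fin n) :
    (univ.filter (fun q : Fin n × Fin k => q.1 = i ∧ WinsPair b q)).card = alloc b i := by
  classical
  have h1 : (univ.filter (fun q : Fin n × Fin k => q.1 = i ∧ WinsPair b q))
      = univ.filter (fun q : Fin n × Fin k => q.1 = i ∧ WinsPair b (i, q.2)) := by
    apply Finset.filter_congr; rintro ⟨q1, q2⟩ _
    constructor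
    · rintro ⟨rfl, h⟩; exact ⟨rfl, h⟩
    · rintro ⟨rfl, h⟩; exact ⟨rfl, h⟩
  rw [h1, card_fiber i (fun j => WinsPair b (i, j))]
  rfl

lemma opp_winners_card (b : Fin n → Fin k → ℝ) (i : Fin n) (hkn : k ≤ n * k) :
    (univ.filter (fun q : Fin n × Fin k => q.1 ≠ i ∧ WinsPair b q)).card
      = k - alloc b i := by
  classical
  have hsplit := Finset.card_filter_add_card_filter_not
    (s := univ.filter (fun q : Fin n × Fin k => WinsPair b q)) (p := fun q => q.1 = i)
  rw [winners_card b hkn] at hsplit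
  have e1 : (univ.filter (fun q : Fin n × Fin k => WinsPair b q)).filter (fun q => q.1 = i)
      = univ.filter (fun q : Fin n × Fin k => q.1 = i ∧ WinsPair b q) := by
    rw [Finset.filter_filter]; apply Finset.filter_congr; intro q _; tauto
  have e2 : (univ.filter (fun q : Fin n × Fin k => WinsPair b q)).filter (fun q => ¬ q.1 = i)
      = univ.filter (fun q : Fin n × Fin k => q.1 ≠ i ∧ WinsPair b q) := by
    rw [Finset.filter_filter]; apply Finset.filter_congr; intro q _; tauto
  rw [e1, e2, winners_fst_card b i] at hsplit
  omega

lemma alloc_ge_of_slots {b' : Fin n → Fin k → ℝ} {i : Fin n} {c : ℕ} (hc : c ≤ k)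
    (h : ∀ j : Fin k, (j : ℕ) < c → WinsPair b' (i, j)) : c ≤ alloc b' i := by
  classical
  have hsub : (univ.filter (fun j : Fin k => (j : ℕ) < c)) ⊆
      (univ.filter (fun j : Fin k => WinsPair b' (i, j))) := by
    intro j hj
    simp only [mem_filter, mem_univ, true_and] at hj ⊢
    exact h j hj
  have := Finset.card_le_card hsub
  rwa [card_slots_lt c hc] at this

end Aux

namespace Aux
variable {n k : ℕ}

lemma wins_update_iff {b : Fin n → Fin k → ℝ} {i : Fin n} {bi' : Fin k → ℝ}
    (hni : ∀ j j' : Fin k, j ≤ j' → b i j' ≤ b i j)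
    (hni' : ∀ j j' : Fin k, j ≤ j' → bi' j' ≤ bi' j)
    {j : Fin k} (hjeq : bi' j = b i j) :
    WinsPair (Function.update b i bi') (i, j) ↔ WinsPair b (i, j) := by
  unfold WinsPair
  rw [beaters_eq_update hni hni' hjeq]

lemma kle (hn : 2 ≤ n) (hk : 1 ≤ k) : k ≤ n * k := by
  calc k = 1 * k := (one_mul k).symm
  _ ≤ n * k := Nat.mul_le_mul_right k (by omega)

lemma klt (hn : 2 ≤ n) (hk : 1 ≤ k) : k < n * k := by
  have : 2 * k ≤ n * k := Nat.mul_le_mul_right k hn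
  omega

/-- Structure lemma: in a PNE with 0 < γ, every winning bid equals the highest losing bid. -/
lemma bid_eq_hl (hn : 2 ≤ n) (hk : 1 ≤ k) {γ : ℝ} (hγ0 : 0 < γ) (hγ1 : γ < 1)
    {v : Fin n → ℕ → ℝ} {b : Fin n → Fin k → ℝ}
    (hb : ∀ i, ValidBid k (v i) (b i))
    (hPNE : ∀ i, ∀ bi' : Fin k → ℝ, ValidBid k (v i) bi' →
      hybridUtility γ v (Function.update b i bi') i ≤ hybridUtility γ v b i)
    (i : Fin n) (j : Fin k) (hj : (j : ℕ) < alloc b i) :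
    b i j = highestLosing b := by
  classical
  have hn1 : 1 ≤ n := by omega
  have hkn : k ≤ n * k := kle hn hk
  have hkn' : k < n * k := klt hn hk
  have hni := (hb i).2.1
  have hwin : WinsPair b (i, j) := (wins_iff_lt_alloc hni j).mpr hj
  have hlle : highestLosing b ≤ b i j := hl_le_winner b hn1 hk hkn' hwin
  by_contra hne
  have hlt : highestLosing b < b i j := lt_of_le_of_ne hlle (fun h => hne h.symm)
  set t : ℝ := (highestLosing b + b i j) / 2 with ht_def
  have ht1 : highestLosing b < t := by rw [ht_def]; linarith
  have ht2 : t < b i j := by rw [ht_def]; linarith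
  have hl0 : 0 ≤ highestLosing b := hl_nonneg b hn1 hk hkn' (fun i' j' => (hb i').1 j')
  have ht0 : 0 ≤ t := by linarith
  set bi' : Fin k → ℝ := fun j' => min (b i j') t with hbi'_def
  have hni' : ∀ j1 j2 : Fin k, j1 ≤ j2 → bi' j2 ≤ bi' j1 := by
    intro j1 j2 h
    exact min_le_min (hni j1 j2 h) (le_refl t)
  have hvalid : ValidBid k (v i) bi' := by
    refine ⟨fun j' => le_min ((hb i).1 j') ht0, hni', ?_⟩
    intro q h1 h2
    refine le_trans (Finset.sum_le_sum (fun j' _ => min_le_left _ _)) ((hb i).2.2 q h1 h2)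
  set b' := Function.update b i bi' with hb'_def
  have hb'i : ∀ j' : Fin k, b' i j' = bi' j' := by
    intro j'; rw [hb'_def, Function.update_self]
  have hb'o : ∀ p : Fin n × Fin k, p.1 ≠ i → b' p.1 p.2 = b p.1 p.2 := by
    intro p hp; rw [hb'_def, Function.update_of_ne hp]
  have hb'le : ∀ p : Fin n × Fin k, b' p.1 p.2 ≤ b p.1 p.2 := by
    intro p
    by_cases hp : p.1 = i
    · rw [hp, hb'i]; exact min_le_left _ _
    · rw [hb'o p hp]
  have hb'ni : ∀ j1 j2 : Fin k, j1 ≤ j2 → b' i j2 ≤ b' i j1 := by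
    intro j1 j2 h; rw [hb'i, hb'i]; exact hni' j1 j2 h
  -- slots below alloc still win
  have hwin' : ∀ j' : Fin k, (j' : ℕ) < alloc b i → WinsPair b' (i, j') := by
    intro j' hj'
    by_cases hcase : b i j' ≤ t
    · have heq : bi' j' = b i j' := min_eq_left hcase
      rw [hb'_def]
      exact (wins_update_iff hni hni' heq).mpr ((wins_iff_lt_alloc hni j').mpr hj')
    · push_neg at hcase
      have hbid : b' i j' = t := by rw [hb'i]; exact min_eq_right (le_of_lt hcase)
      have hsub : (univ.filter (fun p => Beats b' p (i, j'))) ⊆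
          (univ.filter (fun p : Fin n × Fin k => p.1 = i ∧ p.2 < j')) ∪
          (univ.filter (fun p : Fin n × Fin k => p.1 ≠ i ∧ WinsPair b p)) := by
        intro p hp
        simp only [mem_filter, mem_univ, true_and] at hp
        by_cases hpi : p.1 = i
        · apply Finset.mem_union_left
          simp only [mem_filter, mem_univ, true_and]
          refine ⟨hpi, ?_⟩
          obtain ⟨p1, p2⟩ := p
          cases hpi
          exact (own_beats hb'ni j' p2).mp hp
        · apply Finset.mem_union_right
          simp only [mem_filter, mem_univ, true_and]
          refine ⟨hpi, ?_⟩
          have hbp : b' p.1 p.2 = b p.1 p.2 := hb'o p hpi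
          have hge : t ≤ b p.1 p.2 := by
            rcases hp with h | ⟨h1, _⟩
            · rw [← hbp]; rw [hbid] at h; exact le_of_lt h
            · rw [← hbp, h1, hbid]
          by_contra hnw
          have := le_hl b hnw
          linarith
      have hc1 : (univ.filter (fun p : Fin n × Fin k => p.1 = i ∧ p.2 < j')).card
          = (j' : ℕ) := by
        rw [card_fiber i (fun j2 => j2 < j')]
        have : (univ.filter (fun j2 : Fin k => j2 < j'))
            = univ.filter (fun j2 : Fin k => (j2 : ℕ) < (j' : ℕ)) := by
          apply Finset.filter_congr; intro j2 _; exact Iff.rfl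
        rw [this, card_slots_lt (j' : ℕ) (le_of_lt j'.isLt)]
      have hc2 := opp_winners_card b i hkn
      have hcard := Finset.card_le_card hsub
      have hcu := Finset.card_union_le
        (univ.filter (fun p : Fin n × Fin k => p.1 = i ∧ p.2 < j'))
        (univ.filter (fun p : Fin n × Fin k => p.1 ≠ i ∧ WinsPair b p))
      have hak := alloc_le b i
      unfold WinsPair
      rw [hc1, hc2] at hcu
      omega
  -- slots at/above alloc still lose
  have hlose' : ∀ j' : Fin k, alloc b i ≤ (j' : ℕ) → ¬ WinsPair b' (i, j') := by
    intro j' hj'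
    have hnw : ¬ WinsPair b (i, j') := by
      intro h
      have := (wins_iff_lt_alloc hni j').mp h
      omega
    have hble : b i j' ≤ highestLosing b := le_hl b hnw
    have heq : bi' j' = b i j' := min_eq_left (by linarith)
    rw [hb'_def]
    rw [wins_update_iff hni hni' heq]
    exact hnw
  have halloc' : alloc b' i = alloc b i := by
    have hfe : (univ.filter (fun j' : Fin k => WinsPair b' (i, j')))
        = univ.filter (fun j' : Fin k => (j' : ℕ) < alloc b i) := by
      apply Finset.filter_congr
      intro j' _
      constructor
      · intro h
        by_contra hge
        push_neg at hge
        exact hlose' j' hge h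
      · exact hwin' j'
    unfold alloc
    rw [hfe, card_slots_lt (alloc b i) (alloc_le b i)]
    rfl
  -- winner set characterization
  have hWeq : ∀ q : Fin n × Fin k, WinsPair b' q ↔
      ((q.1 = i ∧ (q.2 : ℕ) < alloc b i) ∨ (q.1 ≠ i ∧ WinsPair b q)) := by
    have hAB : (univ.filter (fun q : Fin n × Fin k => q.1 = i ∧ (q.2 : ℕ) < alloc b i))
        ∪ (univ.filter (fun q : Fin n × Fin k => q.1 ≠ i ∧ WinsPair b q))
        ⊆ univ.filter (fun q => WinsPair b' q) := by
      intro q hq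
      simp only [Finset.mem_union, mem_filter, mem_univ, true_and] at hq ⊢
      obtain ⟨q1, q2⟩ := q
      rcases hq with ⟨h1, h2⟩ | ⟨h1, h2⟩
      · cases h1
        exact hwin' q2 h2
      · exact wins_of_le hb'le (hb'o (q1, q2) h1) h2
    have hdisj : Disjoint
        (univ.filter (fun q : Fin n × Fin k => q.1 = i ∧ (q.2 : ℕ) < alloc b i))
        (univ.filter (fun q : Fin n × Fin k => q.1 ≠ i ∧ WinsPair b q)) := by
      rw [Finset.disjoint_left]
      intro q h1 h2
      simp only [mem_filter, mem_univ, true_and] at h1 h2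
      exact h2.1 h1.1
    have hcA : (univ.filter (fun q : Fin n × Fin k => q.1 = i ∧ (q.2 : ℕ) < alloc b i)).card
        = alloc b i := by
      rw [card_fiber i (fun j2 => (j2 : ℕ) < alloc b i),
        card_slots_lt (alloc b i) (alloc_le b i)]
    have hcardAB : ((univ.filter (fun q : Fin n × Fin k => q.1 = i ∧ (q.2 : ℕ) < alloc b i))
        ∪ (univ.filter (fun q : Fin n × Fin k => q.1 ≠ i ∧ WinsPair b q))).card = k := by
      rw [Finset.card_union_of_disjoint hdisj, hcA, opp_winners_card b i hkn]
      have := alloc_le b i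
      omega
    have hW : univ.filter (fun q => WinsPair b' q)
        = (univ.filter (fun q : Fin n × Fin k => q.1 = i ∧ (q.2 : ℕ) < alloc b i))
        ∪ (univ.filter (fun q : Fin n × Fin k => q.1 ≠ i ∧ WinsPair b q)) := by
      refine (Finset.eq_of_subset_of_card_le hAB ?_).symm
      rw [winners_card b' hkn, hcardAB]
    intro q
    constructor
    · intro h
      have : q ∈ univ.filter (fun q => WinsPair b' q) := by
        simp only [mem_filter, mem_univ, true_and]; exact h
      rw [hW] at this
      simp only [Finset.mem_union, mem_filter, mem_univ, true_and] at this
      exact this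
    · intro h
      have : q ∈ (univ.filter (fun q : Fin n × Fin k => q.1 = i ∧ (q.2 : ℕ) < alloc b i))
          ∪ (univ.filter (fun q : Fin n × Fin k => q.1 ≠ i ∧ WinsPair b q)) := by
        simp only [Finset.mem_union, mem_filter, mem_univ, true_and]; exact h
      rw [← hW] at this
      simp only [mem_filter, mem_univ, true_and] at this
      exact this
  -- highest losing bid unchanged
  have hhl' : highestLosing b' = highestLosing b := by
    have hset : {x : ℝ | ∃ q : Fin n × Fin k, ¬ WinsPair b' q ∧ x = b' q.1 q.2}
        = {x : ℝ | ∃ q : Fin n × Fin k, ¬ WinsPair b q ∧ x = b q.1 q.2} := by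
      ext x
      constructor
      · rintro ⟨⟨q1, q2⟩, hq, rfl⟩
        by_cases hqi : q1 = i
        · subst hqi
          have hge : alloc b q1 ≤ (q2 : ℕ) := by
            by_contra hlt2
            push_neg at hlt2
            exact hq ((hWeq (q1, q2)).mpr (Or.inl ⟨rfl, hlt2⟩))
          have hnw : ¬ WinsPair b (q1, q2) := by
            intro h
            have := (wins_iff_lt_alloc hni q2).mp h
            omega
          have hble : b q1 q2 ≤ highestLosing b := le_hl b hnw
          have hbeq : b' q1 q2 = b q1 q2 := by
            rw [hb'i]; exact min_eq_left (by linarith)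
          exact ⟨(q1, q2), hnw, hbeq⟩
        · have hnw : ¬ WinsPair b (q1, q2) := by
            intro h
            exact hq ((hWeq (q1, q2)).mpr (Or.inr ⟨hqi, h⟩))
          exact ⟨(q1, q2), hnw, hb'o (q1, q2) hqi⟩
      · rintro ⟨⟨q1, q2⟩, hq, rfl⟩
        by_cases hqi : q1 = i
        · subst hqi
          have hge : alloc b q1 ≤ (q2 : ℕ) := by
            by_contra hlt2
            push_neg at hlt2
            exact hq ((wins_iff_lt_alloc hni q2).mpr hlt2)
          have hnw' : ¬ WinsPair b' (q1, q2) := by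
            intro h
            rcases (hWeq (q1, q2)).mp h with ⟨_, h2⟩ | ⟨h1, _⟩
            · have h2' : (q2 : ℕ) < alloc b q1 := h2
              omega
            · exact h1 rfl
          have hble : b q1 q2 ≤ highestLosing b := le_hl b hq
          have hbeq : b' q1 q2 = b q1 q2 := by
            rw [hb'i]; exact min_eq_left (by linarith)
          exact ⟨(q1, q2), hnw', hbeq.symm⟩
        · have hnw' : ¬ WinsPair b' (q1, q2) := by
            intro h
            rcases (hWeq (q1, q2)).mp h with ⟨h1, _⟩ | ⟨_, h2⟩
            · exact hqi h1
            · exact hq h2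
          exact ⟨(q1, q2), hnw', (hb'o (q1, q2) hqi).symm⟩
    unfold highestLosing
    rw [hset]
  -- utility comparison
  have hineq := hPNE i bi' hvalid
  rw [← hb'_def] at hineq
  unfold hybridUtility hybridPayment at hineq
  rw [halloc', hhl'] at hineq
  have hsum_eq : ∀ j' ∈ univ.filter (fun j' : Fin k => (j' : ℕ) < alloc b i),
      b' i j' = bi' j' := fun j' _ => hb'i j'
  rw [Finset.sum_congr rfl hsum_eq] at hineq
  have hSle : (∑ j' ∈ univ.filter (fun j' : Fin k => (j' : ℕ) < alloc b i), b i j')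
      ≤ ∑ j' ∈ univ.filter (fun j' : Fin k => (j' : ℕ) < alloc b i), bi' j' := by
    nlinarith [hineq]
  have hSlt : (∑ j' ∈ univ.filter (fun j' : Fin k => (j' : ℕ) < alloc b i), bi' j')
      < ∑ j' ∈ univ.filter (fun j' : Fin k => (j' : ℕ) < alloc b i), b i j' := by
    apply Finset.sum_lt_sum (fun j' _ => min_le_left _ _)
    refine ⟨j, by simp [hj], ?_⟩
    show min (b i j) t < b i j
    rw [min_eq_right (le_of_lt ht2)]
    exact ht2
  linarith

end Aux

namespace Aux
variable {n k : ℕ}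

lemma card_fiber_lt (i : Fin n) (j' : Fin k) :
    (univ.filter (fun p : Fin n × Fin k => p.1 = i ∧ p.2 < j')).card = (j' : ℕ) := by
  classical
  rw [card_fiber i (fun j2 => j2 < j')]
  have : (univ.filter (fun j2 : Fin k => j2 < j'))
      = univ.filter (fun j2 : Fin k => (j2 : ℕ) < (j' : ℕ)) := by
    apply Finset.filter_congr; intro j2 _; exact Iff.rfl
  rw [this, card_slots_lt (j' : ℕ) (le_of_lt j'.isLt)]

section PNE

variable {γ : ℝ} {v : Fin n → ℕ → ℝ} {b : Fin n → Fin k → ℝ}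

lemma bid_le_hl (hn : 2 ≤ n) (hk : 1 ≤ k) (hγ0 : 0 < γ) (hγ1 : γ < 1)
    (hb : ∀ i, ValidBid k (v i) (b i))
    (hPNE : ∀ i, ∀ bi' : Fin k → ℝ, ValidBid k (v i) bi' →
      hybridUtility γ v (Function.update b i bi') i ≤ hybridUtility γ v b i)
    (i : Fin n) (j : Fin k) : b i j ≤ highestLosing b := by
  by_cases hw : WinsPair b (i, j)
  · have := (wins_iff_lt_alloc (hb i).2.1 j).mp hw
    exact le_of_eq (bid_eq_hl hn hk hγ0 hγ1 hb hPNE i j this)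
  · exact le_hl b hw

lemma util_eq (hn : 2 ≤ n) (hk : 1 ≤ k) (hγ0 : 0 < γ) (hγ1 : γ < 1)
    (hb : ∀ i, ValidBid k (v i) (b i))
    (hPNE : ∀ i, ∀ bi' : Fin k → ℝ, ValidBid k (v i) bi' →
      hybridUtility γ v (Function.update b i bi') i ≤ hybridUtility γ v b i)
    (i : Fin n) :
    hybridUtility γ v b i
      = v i (alloc b i) - (alloc b i : ℝ) * highestLosing b := by
  unfold hybridUtility hybridPayment
  have hsum : (∑ j ∈ univ.filter (fun j : Fin k => (j : ℕ) < alloc b i), b i j)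
      = (alloc b i : ℝ) * highestLosing b := by
    rw [Finset.sum_congr rfl (fun j hj => bid_eq_hl hn hk hγ0 hγ1 hb hPNE i j
      (by simpa using hj))]
    rw [Finset.sum_const, card_slots_lt (alloc b i) (alloc_le b i), nsmul_eq_mul]
  rw [hsum]
  ring

/-- Lemma (I): the marginal value of each winner's last unit is at least the price. -/
lemma hl_le_marg (hn : 2 ≤ n) (hk : 1 ≤ k) (hγ0 : 0 < γ) (hγ1 : γ < 1)
    (hvmono : ∀ i (q : ℕ), q < k → v i q ≤ v i (q + 1))
    (hb : ∀ i, ValidBid k (v i) (b i))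
    (hPNE : ∀ i, ∀ bi' : Fin k → ℝ, ValidBid k (v i) bi' →
      hybridUtility γ v (Function.update b i bi') i ≤ hybridUtility γ v b i)
    (l : Fin n) (hx : 1 ≤ alloc b l) :
    highestLosing b ≤ v l (alloc b l) - v l (alloc b l - 1) := by
  classical
  have hn1 : 1 ≤ n := by omega
  have hkn : k ≤ n * k := kle hn hk
  have hkn' : k < n * k := klt hn hk
  have hl0 : 0 ≤ highestLosing b := hl_nonneg b hn1 hk hkn' (fun i' j' => (hb i').1 j')
  have hxk : alloc b l ≤ k := alloc_le b l
  have hni := (hb l).2.1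
  set x := alloc b l with hx_def
  set bi' : Fin k → ℝ := fun j => if (j : ℕ) < x - 1 then highestLosing b else 0
    with hbi'_def
  have hni' : ∀ j1 j2 : Fin k, j1 ≤ j2 → bi' j2 ≤ bi' j1 := by
    intro j1 j2 h
    show (if (j2 : ℕ) < x - 1 then highestLosing b else 0)
      ≤ (if (j1 : ℕ) < x - 1 then highestLosing b else 0)
    have h' : (j1 : ℕ) ≤ (j2 : ℕ) := h
    split_ifs with hc2 hc1 hc1'
    · exact le_refl _
    · omega
    · exact hl0
    · exact le_refl _
  have hpt : ∀ j : Fin k, bi' j ≤ b l j := by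
    intro j
    show (if (j : ℕ) < x - 1 then highestLosing b else 0) ≤ b l j
    split_ifs with hc
    · have hjx : (j : ℕ) < x := by omega
      rw [bid_eq_hl hn hk hγ0 hγ1 hb hPNE l j hjx]
    · exact (hb l).1 j
  have hvalid : ValidBid k (v l) bi' := by
    refine ⟨?_, hni', ?_⟩
    · intro j
      show 0 ≤ (if (j : ℕ) < x - 1 then highestLosing b else 0)
      split_ifs with hc
      · exact hl0
      · exact le_refl _
    · intro q h1 h2
      exact le_trans (Finset.sum_le_sum (fun j _ => hpt j)) ((hb l).2.2 q h1 h2)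
  set b' := Function.update b l bi' with hb'_def
  have hb'i : ∀ j : Fin k, b' l j = bi' j := by
    intro j; rw [hb'_def, Function.update_self]
  have hb'o : ∀ p : Fin n × Fin k, p.1 ≠ l → b' p.1 p.2 = b p.1 p.2 := by
    intro p hp; rw [hb'_def, Function.update_of_ne hp]
  have hb'ni : ∀ j1 j2 : Fin k, j1 ≤ j2 → b' l j2 ≤ b' l j1 := by
    intro j1 j2 h; rw [hb'i, hb'i]; exact hni' j1 j2 h
  have hb'pos : ∀ i' j', 0 ≤ b' i' j' := by
    intro i' j'
    by_cases hp : i' = l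
    · subst hp; rw [hb'i]; exact hvalid.1 j'
    · have : b' i' j' = b i' j' := hb'o (i', j') hp
      rw [this]; exact (hb i').1 j'
  have hble_all : ∀ p : Fin n × Fin k, b' p.1 p.2 ≤ highestLosing b := by
    intro p
    by_cases hp : p.1 = l
    · obtain ⟨p1, p2⟩ := p
      cases hp
      rw [hb'i]
      show (if (p2 : ℕ) < x - 1 then highestLosing b else 0) ≤ highestLosing b
      split_ifs
      · exact le_refl _
      · exact hl0
    · rw [hb'o p hp]
      exact bid_le_hl hn hk hγ0 hγ1 hb hPNE p.1 p.2
  -- slots below x-1 still win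
  have hwin' : ∀ j : Fin k, (j : ℕ) < x - 1 → WinsPair b' (l, j) := by
    intro j hj
    have hjx : (j : ℕ) < x := by omega
    have heq : bi' j = b l j := by
      show (if (j : ℕ) < x - 1 then highestLosing b else 0) = b l j
      rw [if_pos hj, bid_eq_hl hn hk hγ0 hγ1 hb hPNE l j hjx]
    rw [hb'_def]
    exact (wins_update_iff hni hni' heq).mpr ((wins_iff_lt_alloc hni j).mpr hjx)
  have hx'ge : x - 1 ≤ alloc b' l := alloc_ge_of_slots (by omega) hwin'
  have hx'le : alloc b' l ≤ k := alloc_le b' l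
  have hl'le : highestLosing b' ≤ highestLosing b :=
    hl_le b' hn1 hk hkn' (fun q _ => hble_all q)
  have hl'0 : 0 ≤ highestLosing b' := hl_nonneg b' hn1 hk hkn' hb'pos
  -- winning sum
  have hsum : (∑ j ∈ univ.filter (fun j : Fin k => (j : ℕ) < alloc b' l), b' l j)
      = ((x - 1 : ℕ) : ℝ) * highestLosing b := by
    rw [Finset.sum_congr rfl (fun j _ => hb'i j)]
    have : (∑ j ∈ univ.filter (fun j : Fin k => (j : ℕ) < alloc b' l), bi' j)
        = (min (alloc b' l) (x - 1) : ℕ) * highestLosing b :=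
      sum_ite_slots (alloc b' l) (x - 1) (highestLosing b) hx'le
    rw [this]
    congr 2
    omega
  have hU' : hybridUtility γ v b' l = v l (alloc b' l)
      - (γ * (((x - 1 : ℕ) : ℝ) * highestLosing b)
        + (1 - γ) * (alloc b' l : ℝ) * highestLosing b') := by
    unfold hybridUtility hybridPayment
    rw [hsum]
  have hineq := hPNE l bi' hvalid
  rw [← hb'_def] at hineq
  rw [hU', util_eq hn hk hγ0 hγ1 hb hPNE l, ← hx_def] at hineq
  have hcast : ((x - 1 : ℕ) : ℝ) = (x : ℝ) - 1 := by
    push_cast [hx]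
    ring
  rcases Nat.lt_or_ge (alloc b' l) x with hc | hc
  · -- alloc b' l = x - 1
    have hx' : alloc b' l = x - 1 := by omega
    rw [hx'] at hineq
    have hxR : ((x : ℝ)) ≥ 1 := by exact_mod_cast hx
    rw [hcast] at hineq
    have h2 : (1 - γ) * ((x : ℝ) - 1) * highestLosing b'
        ≤ (1 - γ) * ((x : ℝ) - 1) * highestLosing b := by
      apply mul_le_mul_of_nonneg_left hl'le
      nlinarith
    linarith [hineq, h2]
  · -- alloc b' l ≥ x : the zero bid at slot x-1 wins, so highestLosing b' = 0
    have hx1k : x - 1 < k := by omega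
    set j0 : Fin k := ⟨x - 1, hx1k⟩ with hj0_def
    have hj0win : WinsPair b' (l, j0) := by
      rw [wins_iff_lt_alloc hb'ni j0]
      show x - 1 < alloc b' l
      omega
    have hj0bid : b' l j0 = 0 := by
      rw [hb'i]
      show (if ((j0 : ℕ)) < x - 1 then highestLosing b else 0) = 0
      rw [if_neg (by simp [hj0_def])]
    have hl'le0 : highestLosing b' ≤ 0 := by
      apply hl_le b' hn1 hk hkn'
      intro q hq
      have := loser_bid_le hj0win hq
      rw [hj0bid] at this
      exact this
    have hl'eq : highestLosing b' = 0 := le_antisymm hl'le0 hl'0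
    rw [hl'eq] at hineq
    have hmono' : v l x ≤ v l (alloc b' l) :=
      mono_chain (v l) (hvmono l) x (alloc b' l) hc hx'le
    rw [hcast] at hineq
    have hxR : ((x : ℝ)) ≥ 1 := by exact_mod_cast hx
    have key : (highestLosing b) * ((x : ℝ) - γ * ((x : ℝ) - 1)) ≤ 0 := by
      nlinarith [hineq, hmono']
    have coeff : (1 : ℝ) ≤ (x : ℝ) - γ * ((x : ℝ) - 1) := by
      nlinarith [mul_nonneg (by linarith : (0:ℝ) ≤ (x:ℝ) - 1) (by linarith : (0:ℝ) ≤ 1 - γ)]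
    have hhl0 : highestLosing b ≤ 0 := by
      have := mul_le_mul_of_nonneg_left coeff hl0
      nlinarith [key, this]
    have hmarg0 : 0 ≤ v l x - v l (x - 1) := by
      have := hvmono l (x - 1) (by omega)
      have hxx : x - 1 + 1 = x := by omega
      rw [hxx] at this
      linarith
    linarith

end PNE
end Aux

namespace Aux
variable {n k : ℕ}
section PNE2
variable {γ : ℝ} {v : Fin n → ℕ → ℝ} {b : Fin n → Fin k → ℝ}

/-- Lemma (II): the marginal value of an extra unit is at most the price. -/
lemma marg_le_hl (hn : 2 ≤ n) (hk : 1 ≤ k) (hγ0 : 0 < γ) (hγ1 : γ < 1)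
    (hv0 : ∀ i, v i 0 = 0)
    (hvmono : ∀ i (q : ℕ), q < k → v i q ≤ v i (q + 1))
    (hvsub : ∀ i (q : ℕ), 1 ≤ q → q + 1 ≤ k →
      v i (q + 1) - v i q ≤ v i q - v i (q - 1))
    (hb : ∀ i, ValidBid k (v i) (b i))
    (hPNE : ∀ i, ∀ bi' : Fin k → ℝ, ValidBid k (v i) bi' →
      hybridUtility γ v (Function.update b i bi') i ≤ hybridUtility γ v b i)
    (i : Fin n) (hxk : alloc b i < k) :
    v i (alloc b i + 1) - v i (alloc b i) ≤ highestLosing b := by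
  classical
  by_contra hcon
  push_neg at hcon
  have hn1 : 1 ≤ n := by omega
  have hkn : k ≤ n * k := kle hn hk
  have hkn' : k < n * k := klt hn hk
  have hl0 : 0 ≤ highestLosing b := hl_nonneg b hn1 hk hkn' (fun i' j' => (hb i').1 j')
  set x := alloc b i with hx_def
  set m := v i (x + 1) - v i x with hm_def
  set D : ℝ := γ * ((x : ℝ) + 1) + 1 with hD_def
  have hD1 : (1 : ℝ) ≤ D := by
    rw [hD_def]
    have : (0:ℝ) ≤ (x : ℝ) + 1 := by positivity
    nlinarith
  have hD0 : (0 : ℝ) < D := by linarith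
  set ε : ℝ := (m - highestLosing b) / D with hε_def
  have hε0 : 0 < ε := div_pos (by linarith) hD0
  have hεle : ε ≤ m - highestLosing b := by
    rw [hε_def]
    exact div_le_self (by linarith) hD1
  set t : ℝ := highestLosing b + ε with ht_def
  have ht1 : highestLosing b < t := by rw [ht_def]; linarith
  have htm : t ≤ m := by rw [ht_def]; linarith
  have ht0 : 0 ≤ t := by linarith
  -- the new bid vector
  set bi' : Fin k → ℝ := fun j => if (j : ℕ) < x + 1 then t else 0 with hbi'_def
  have hni' : ∀ j1 j2 : Fin k, j1 ≤ j2 → bi' j2 ≤ bi' j1 := by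
    intro j1 j2 h
    have h' : (j1 : ℕ) ≤ (j2 : ℕ) := h
    show (if (j2 : ℕ) < x + 1 then t else 0) ≤ (if (j1 : ℕ) < x + 1 then t else 0)
    split_ifs with hc2 hc1 hc1'
    · exact le_refl _
    · omega
    · exact ht0
    · exact le_refl _
  -- prefix sums of the new bid vector
  have hprefix : ∀ q : ℕ, q ≤ k →
      (∑ j ∈ univ.filter (fun j : Fin k => (j : ℕ) < q), bi' j)
        = (min q (x + 1) : ℕ) * t := by
    intro q hq
    exact sum_ite_slots q (x + 1) t hq
  have hstep : ∀ m', m' + 1 ≤ x + 1 → t ≤ v i (m' + 1) - v i m' := by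
    intro m' hm'
    have := marg_anti (v i) (hvsub i) m' x (by omega) (by omega)
    rw [← hm_def] at this
    linarith
  have hqt : ∀ q : ℕ, q ≤ x + 1 → (q : ℝ) * t ≤ v i q := by
    intro q hq
    have := le_diff_of_step (v i) t 0 q (Nat.zero_le q)
      (fun m' _ hm' => hstep m' (by omega))
    rw [hv0 i] at this
    push_cast at this
    linarith
  have hvalid : ValidBid k (v i) bi' := by
    refine ⟨?_, hni', ?_⟩
    · intro j
      show 0 ≤ (if (j : ℕ) < x + 1 then t else 0)
      split_ifs
      · exact ht0
      · exact le_refl _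
    · intro q h1 h2
      rw [hprefix q h2]
      rcases le_or_gt q (x + 1) with hc | hc
      · have : min q (x + 1) = q := by omega
        rw [this]
        exact hqt q hc
      · have : min q (x + 1) = x + 1 := by omega
        rw [this]
        have h1' : ((x + 1 : ℕ) : ℝ) * t ≤ v i (x + 1) := by
          have := hqt (x + 1) (le_refl _)
          push_cast at this ⊢
          linarith
        have h2' : v i (x + 1) ≤ v i q :=
          mono_chain (v i) (hvmono i) (x + 1) q (by omega) h2
        linarith
  set b' := Function.update b i bi' with hb'_def
  have hb'i : ∀ j : Fin k, b' i j = bi' j := by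
    intro j; rw [hb'_def, Function.update_self]
  have hb'o : ∀ p : Fin n × Fin k, p.1 ≠ i → b' p.1 p.2 = b p.1 p.2 := by
    intro p hp; rw [hb'_def, Function.update_of_ne hp]
  have hb'ni : ∀ j1 j2 : Fin k, j1 ≤ j2 → b' i j2 ≤ b' i j1 := by
    intro j1 j2 h; rw [hb'i, hb'i]; exact hni' j1 j2 h
  have hb'pos : ∀ i' j', 0 ≤ b' i' j' := by
    intro i' j'
    by_cases hp : i' = i
    · subst hp; rw [hb'i]; exact hvalid.1 j'
    · have : b' i' j' = b i' j' := hb'o (i', j') hp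
      rw [this]; exact (hb i').1 j'
  -- slots up to x win under b'
  have hwin' : ∀ j : Fin k, (j : ℕ) < x + 1 → WinsPair b' (i, j) := by
    intro j hj
    have hbid : b' i j = t := by
      rw [hb'i]
      show (if (j : ℕ) < x + 1 then t else 0) = t
      rw [if_pos hj]
    have hsub : (univ.filter (fun p => Beats b' p (i, j))) ⊆
        (univ.filter (fun p : Fin n × Fin k => p.1 = i ∧ p.2 < j)) := by
      intro p hp
      simp only [mem_filter, mem_univ, true_and] at hp ⊢
      by_cases hpi : p.1 = i
      · refine ⟨hpi, ?_⟩
        obtain ⟨p1, p2⟩ := p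
        cases hpi
        exact (own_beats hb'ni j p2).mp hp
      · exfalso
        have hbp : b' p.1 p.2 = b p.1 p.2 := hb'o p hpi
        have hgb : t ≤ b p.1 p.2 := by
          rcases hp with h | ⟨h1, _⟩
          · rw [← hbp]; rw [hbid] at h; exact le_of_lt h
          · rw [← hbp, h1, hbid]
        have := bid_le_hl hn hk hγ0 hγ1 hb hPNE p.1 p.2
        linarith
    have hcard := Finset.card_le_card hsub
    rw [card_fiber_lt i j] at hcard
    unfold WinsPair
    omega
  have hx'ge : x + 1 ≤ alloc b' i := alloc_ge_of_slots (by omega) hwin'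
  have hx'le : alloc b' i ≤ k := alloc_le b' i
  -- losers' bids under b' are at most the old highest losing bid
  have hl'le : highestLosing b' ≤ highestLosing b := by
    apply hl_le b' hn1 hk hkn'
    intro q hq
    by_cases hp : q.1 = i
    · obtain ⟨q1, q2⟩ := q
      cases hp
      by_cases hc : (q2 : ℕ) < x + 1
      · exact absurd (hwin' q2 hc) hq
      · rw [hb'i]
        show (if (q2 : ℕ) < x + 1 then t else 0) ≤ highestLosing b
        rw [if_neg hc]
        exact hl0
    · rw [hb'o q hp]
      exact bid_le_hl hn hk hγ0 hγ1 hb hPNE q.1 q.2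
  have hl'0 : 0 ≤ highestLosing b' := hl_nonneg b' hn1 hk hkn' hb'pos
  -- winning sum
  have hsum : (∑ j ∈ univ.filter (fun j : Fin k => (j : ℕ) < alloc b' i), b' i j)
      = ((x : ℝ) + 1) * t := by
    rw [Finset.sum_congr rfl (fun j _ => hb'i j)]
    rw [sum_ite_slots (alloc b' i) (x + 1) t hx'le]
    have : min (alloc b' i) (x + 1) = x + 1 := by omega
    rw [this]
    push_cast
    ring
  -- second-price component bound
  have hsp : (1 - γ) * (alloc b' i : ℝ) * highestLosing b'
      ≤ (1 - γ) * ((x : ℝ) + 1) * highestLosing b := by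
    rcases le_or_gt (alloc b' i) (x + 1) with hc | hc
    · have hx' : alloc b' i = x + 1 := by omega
      rw [hx']
      push_cast
      apply mul_le_mul_of_nonneg_left hl'le
      exact mul_nonneg (by linarith) (by positivity)
    · -- some zero bid wins, hence highestLosing b' = 0
      have hx1k : x + 1 < k := by omega
      set j0 : Fin k := ⟨x + 1, hx1k⟩ with hj0_def
      have hj0win : WinsPair b' (i, j0) := by
        rw [wins_iff_lt_alloc hb'ni j0]
        show x + 1 < alloc b' i
        omega
      have hj0bid : b' i j0 = 0 := by
        rw [hb'i]
        show (if ((j0 : ℕ)) < x + 1 then t else 0) = 0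
        rw [if_neg (by simp [hj0_def])]
      have hl'le0 : highestLosing b' ≤ 0 := by
        apply hl_le b' hn1 hk hkn'
        intro q hq
        have := loser_bid_le hj0win hq
        rw [hj0bid] at this
        exact this
      have hl'eq : highestLosing b' = 0 := le_antisymm hl'le0 hl'0
      rw [hl'eq]
      have : (0:ℝ) ≤ (1 - γ) * ((x : ℝ) + 1) * highestLosing b :=
        mul_nonneg (mul_nonneg (by linarith) (by positivity)) hl0
      linarith [this]
  -- utility comparison
  have hU' : hybridUtility γ v b' i = v i (alloc b' i)
      - (γ * (((x : ℝ) + 1) * t)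
        + (1 - γ) * (alloc b' i : ℝ) * highestLosing b') := by
    unfold hybridUtility hybridPayment
    rw [hsum]
  have hineq := hPNE i bi' hvalid
  rw [← hb'_def] at hineq
  rw [hU', util_eq hn hk hγ0 hγ1 hb hPNE i, ← hx_def] at hineq
  have hmono' : v i (x + 1) ≤ v i (alloc b' i) :=
    mono_chain (v i) (hvmono i) (x + 1) (alloc b' i) hx'ge hx'le
  -- conclude m ≤ hl + γ(x+1)ε
  have hkey : m ≤ highestLosing b + γ * ((x : ℝ) + 1) * ε := by
    rw [hm_def]
    have ht' : t = highestLosing b + ε := ht_def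
    nlinarith [hineq, hmono', hsp]
  -- contradiction
  have hfin : m - highestLosing b ≤ γ * ((x : ℝ) + 1) * ((m - highestLosing b) / D) := by
    rw [← hε_def]
    linarith
  rw [← mul_div_assoc] at hfin
  have hfin2 : (m - highestLosing b) * D ≤ γ * ((x : ℝ) + 1) * (m - highestLosing b) :=
    (le_div_iff₀ hD0).mp hfin
  rw [hD_def] at hfin2
  nlinarith [hfin2]

end PNE2
end Aux

/-- Pure Nash equilibria of the multi-unit γ-hybrid auction without overbidding are
efficient: for `γ ∈ (0,1)`, `k ≥ 1` items and `n ≥ 2` bidders with nondecreasing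
submodular valuations vanishing at `0`, the social welfare of any pure Nash equilibrium
(in nonincreasing, no-overbidding marginal bid vectors) is the maximum welfare
`max {∑ i, v i (y i) : ∑ i, y i = k}`. -/
theorem pne_efficient_multiunit_hybrid {n k : ℕ} (hn : 2 ≤ n) (hk : 1 ≤ k)
    (γ : ℝ) (hγ : γ ∈ Set.Ioo (0:ℝ) 1)
    (v : Fin n → ℕ → ℝ)
    (hv0 : ∀ i, v i 0 = 0)
    (hvmono : ∀ i (q : ℕ), q < k → v i q ≤ v i (q + 1))
    (hvsub : ∀ i (q : ℕ), 1 ≤ q → q + 1 ≤ k →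
      v i (q + 1) - v i q ≤ v i q - v i (q - 1))
    (b : Fin n → Fin k → ℝ)
    (hb : ∀ i, ValidBid k (v i) (b i))
    (hPNE : ∀ i, ∀ bi' : Fin k → ℝ, ValidBid k (v i) bi' →
      hybridUtility γ v (Function.update b i bi') i ≤ hybridUtility γ v b i) :
    IsGreatest {s : ℝ | ∃ y : Fin n → ℕ, (∑ i, y i) = k ∧ s = ∑ i, v i (y i)}
      (∑ i, v i (alloc b i)) := by
  classical
  obtain ⟨hγ0, hγ1⟩ := hγ
  have hkn : k ≤ n * k := Aux.kle hn hk
  constructor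
  · exact ⟨alloc b, Aux.sum_alloc b hkn, rfl⟩
  · rintro s ⟨y, hy, rfl⟩
    have hyle : ∀ i, y i ≤ k := by
      intro i
      rw [← hy]
      exact Finset.single_le_sum (f := y) (fun _ _ => Nat.zero_le _) (mem_univ i)
    have hper : ∀ i : Fin n, v i (y i) ≤ v i (alloc b i)
        + ((y i : ℝ) - (alloc b i : ℝ)) * highestLosing b := by
      intro i
      rcases le_or_gt (y i) (alloc b i) with hc | hc
      · have hstep : ∀ m', y i ≤ m' → m' + 1 ≤ alloc b i →
            highestLosing b ≤ v i (m' + 1) - v i m' := by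
          intro m' _ hm'
          have h1 : v i (alloc b i) - v i (alloc b i - 1) ≤ v i (m' + 1) - v i m' := by
            have := Aux.marg_anti (v i) (hvsub i) m' (alloc b i - 1)
              (by omega) (by have := Aux.alloc_le b i; omega)
            have hxx : alloc b i - 1 + 1 = alloc b i := by omega
            rw [hxx] at this
            exact this
          have h2 : highestLosing b ≤ v i (alloc b i) - v i (alloc b i - 1) :=
            Aux.hl_le_marg hn hk hγ0 hγ1 hvmono hb hPNE i (by omega)
          linarith
        have := Aux.le_diff_of_step (v i) (highestLosing b) (y i) (alloc b i) hc
          (fun m' h1 h2 => hstep m' h1 h2)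
        nlinarith [this]
      · have hstep : ∀ m', alloc b i ≤ m' → m' + 1 ≤ y i →
            v i (m' + 1) - v i m' ≤ highestLosing b := by
          intro m' hm1 hm2
          have h1 : v i (m' + 1) - v i m' ≤ v i (alloc b i + 1) - v i (alloc b i) :=
            Aux.marg_anti (v i) (hvsub i) (alloc b i) m' hm1
              (by have := hyle i; omega)
          have h2 : v i (alloc b i + 1) - v i (alloc b i) ≤ highestLosing b :=
            Aux.marg_le_hl hn hk hγ0 hγ1 hv0 hvmono hvsub hb hPNE i
              (by have := hyle i; omega)
          linarith
        have := Aux.diff_le_of_step (v i) (highestLosing b) (alloc b i) (y i)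
          (le_of_lt hc) (fun m' h1 h2 => hstep m' h1 h2)
        nlinarith [this]
    have hsum := Finset.sum_le_sum (s := univ) (fun i _ => hper i)
    have hcasty : (∑ i, ((y i : ℝ))) = (k : ℝ) := by
      rw [← Nat.cast_sum, hy]
    have hcastx : (∑ i, ((alloc b i : ℝ))) = (k : ℝ) := by
      rw [← Nat.cast_sum, Aux.sum_alloc b hkn]
    have hexp : (∑ i, (v i (alloc b i)
        + ((y i : ℝ) - (alloc b i : ℝ)) * highestLosing b))
        = (∑ i, v i (alloc b i))
          + ((∑ i, ((y i : ℝ))) - (∑ i, ((alloc b i : ℝ)))) * highestLosing b := by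
      rw [Finset.sum_add_distrib, ← Finset.sum_mul, Finset.sum_sub_distrib]
    rw [hexp, hcasty, hcastx] at hsum
    simpa using hsum

end
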